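/- Let T be a phylogenetic X-tree with tree metric δ_T, let a, b be leaves of T, and let e be an edge of T. Writing Z_{δ_T}(a,b) = ∑_{e' ∈ E(T)} β(e') l(e') as a linear function of the edge lengths (with Z scaled by C(n-1,2)), the coefficient of l(e) is β(e) = -(N⁺_e(a) - 1)(N⁻_e(a) - 1) if e lies on the path from a to b, and β(e) = N⁻_e(a)(N⁻_e(a) - 1) otherwise, where N⁺_e(a) and N⁻_e(a) are the numbers of leaves on the same side and the far side of e from a, respectively. -/

import Mathlib

open Finset
open scoped Classical

/-- `w_δ(ij:kl) = (1/2)(δ(i,k)+δ(i,l)+δ(j,k)+δ(j,l)) - δ(i,j) - δ(k,l)`. -/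
noncomputable def njw {X : Type*} (δ : X → X → ℝ) (i j k l : X) : ℝ :=
  (δ i k + δ i l + δ j k + δ j l) / 2 - δ i j - δ k l

/-- Edge `e` (with split side `σ e`) separates the pair `p,q` from the pair `r,s`. -/
def sepE {X E : Type*} (σ : E → Finset X) (e : E) (p q r s : X) : Prop :=
  (p ∈ σ e ∧ q ∈ σ e ∧ r ∉ σ e ∧ s ∉ σ e) ∨
  (p ∉ σ e ∧ q ∉ σ e ∧ r ∈ σ e ∧ s ∈ σ e)

/-- `(ij:kl)` is a quartet of the tree encoded by the split system `σ`:
some internal edge separates `{i,j}` from `{k,l}`. -/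
def isQuartet {X E : Type*} (σ : E → Finset X) (i j k l : X) : Prop :=
  ∃ e, sepE σ e i j k l

/-- Pairwise compatibility of the splits: the condition under which a split system
is exactly the split system of a (phylogenetic) tree. -/
def splitsCompatible {X E : Type*} [Fintype X] (σ : E → Finset X) : Prop :=
  ∀ e f, σ e ⊆ σ f ∨ σ f ⊆ σ e ∨ (∀ a, a ∈ σ e → a ∉ σ f) ∨ (∀ a, a ∈ σ e ∨ a ∈ σ f)

/-- A dissimilarity map `δ` is quartet consistent with the tree encoded by `σ`. -/
def quartetConsistent {X E : Type*} (σ : E → Finset X) (δ : X → X → ℝ) : Prop :=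
  ∀ i j k l : X, i ≠ j → i ≠ k → i ≠ l → j ≠ k → j ≠ l → k ≠ l →
    isQuartet σ i j k l →
      njw δ i j k l > max (njw δ i k j l) (njw δ i l j k)

/-- The scaled Z-criterion `Z_δ(i,j) = ∑_{{k,l} ⊆ X\{i,j}} w_δ(ij:kl)`
(sum over unordered pairs, written as half the sum over ordered pairs). -/
noncomputable def njZ {X : Type*} [Fintype X] [DecidableEq X]
    (δ : X → X → ℝ) (i j : X) : ℝ :=
  (1 / 2) * ∑ k ∈ (Finset.univ.erase i).erase j,
    ∑ l ∈ ((Finset.univ.erase i).erase j).erase k, njw δ i j k l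

/-- `(x,y)` is a cherry of the tree encoded by `σ`: some edge induces the split
`{x,y} | X \ {x,y}`. -/
def isCherry {X E : Type*} [Fintype X] [DecidableEq X]
    (σ : E → Finset X) (x y : X) : Prop :=
  x ≠ y ∧ ∃ e, σ e = {x, y} ∨ σ e = ({x, y} : Finset X)ᶜ

private lemma sum_pairs_coef {X : Type*} [Fintype X] [DecidableEq X]
    (p : X → Prop) (a b : X) (hab : a ≠ b) :
    (1/2 : ℝ) * ∑ k ∈ (Finset.univ.erase a).erase b,
        ∑ l ∈ (((Finset.univ.erase a).erase b).erase k),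
          (((if p a ≠ p k then (1:ℝ) else 0) + (if p a ≠ p l then (1:ℝ) else 0)
            + (if p b ≠ p k then (1:ℝ) else 0) + (if p b ≠ p l then (1:ℝ) else 0)) / 2
           - (if p a ≠ p b then (1:ℝ) else 0) - (if p k ≠ p l then (1:ℝ) else 0))
      = if p a ≠ p b
          then -((((Finset.univ.filter (fun v : X => p v = p a)).card : ℝ) - 1)
                * (((Finset.univ.filter (fun v : X => p v ≠ p a)).card : ℝ) - 1))
          else ((Finset.univ.filter (fun v : X => p v ≠ p a)).card : ℝ)
               * ((((Finset.univ.filter (fun v : X => p v ≠ p a)).card : ℝ)) - 1) := by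
  classical
  set S : Finset X := (Finset.univ.erase a).erase b with hS
  have hbmem : b ∈ Finset.univ.erase a := Finset.mem_erase.mpr ⟨hab.symm, Finset.mem_univ b⟩
  have haS : a ∉ S := fun h => (Finset.mem_erase.mp (Finset.mem_of_mem_erase h)).1 rfl
  have hbS : b ∉ S := Finset.notMem_erase _ _
  have hcard2 : 2 ≤ Fintype.card X := by
    have : ({a, b} : Finset X).card ≤ Fintype.card X := Finset.card_le_univ _
    rwa [Finset.card_pair hab] at this
  have hmcard : S.card + 2 = Fintype.card X := by
    rw [hS, Finset.card_erase_of_mem hbmem, Finset.card_erase_of_mem (Finset.mem_univ a)]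
    have : (Finset.univ : Finset X).card = Fintype.card X := rfl
    omega
  set m : ℕ := S.card with hm
  set A : ℕ := (S.filter (fun v => p a ≠ p v)).card with hA
  set B : ℕ := (S.filter (fun v => p b ≠ p v)).card with hB
  set C1 : ℕ := (S.filter (fun v => p v)).card with hC1
  set C0 : ℕ := (S.filter (fun v => ¬ p v)).card with hC0
  have hArsum : ∑ l ∈ S, (if p a ≠ p l then (1:ℝ) else 0) = (A:ℝ) := by
    rw [Finset.sum_boole]
  have hBrsum : ∑ l ∈ S, (if p b ≠ p l then (1:ℝ) else 0) = (B:ℝ) := by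
    rw [Finset.sum_boole]
  -- inner sum evaluation
  have hinner : ∀ k ∈ S, ∑ l ∈ S.erase k,
      (((if p a ≠ p k then (1:ℝ) else 0) + (if p a ≠ p l then (1:ℝ) else 0)
        + (if p b ≠ p k then (1:ℝ) else 0) + (if p b ≠ p l then (1:ℝ) else 0)) / 2
       - (if p a ≠ p b then (1:ℝ) else 0) - (if p k ≠ p l then (1:ℝ) else 0))
      = ((m:ℝ)-1) * (((if p a ≠ p k then (1:ℝ) else 0) + (if p b ≠ p k then (1:ℝ) else 0))/2
            - (if p a ≠ p b then (1:ℝ) else 0))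
        + ((A:ℝ) - (if p a ≠ p k then (1:ℝ) else 0) + (B:ℝ) - (if p b ≠ p k then (1:ℝ) else 0))/2
        - (if p k then (C0:ℝ) else (C1:ℝ)) := by
    intro k hk
    have hcardE : (S.erase k).card = m - 1 := by rw [Finset.card_erase_of_mem hk]
    have hm1 : 1 ≤ m := by
      have : 0 < S.card := Finset.card_pos.mpr ⟨k, hk⟩
      omega
    have h1 : ∑ l ∈ S.erase k, (if p a ≠ p l then (1:ℝ) else 0)
        = (A:ℝ) - (if p a ≠ p k then (1:ℝ) else 0) := by
      rw [Finset.sum_erase_eq_sub hk, hArsum]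
    have h2 : ∑ l ∈ S.erase k, (if p b ≠ p l then (1:ℝ) else 0)
        = (B:ℝ) - (if p b ≠ p k then (1:ℝ) else 0) := by
      rw [Finset.sum_erase_eq_sub hk, hBrsum]
    have h3 : ∑ l ∈ S.erase k, (if p k ≠ p l then (1:ℝ) else 0)
        = (if p k then (C0:ℝ) else (C1:ℝ)) := by
      have hkk : (if p k ≠ p k then (1:ℝ) else 0) = 0 := by simp
      rw [Finset.sum_erase_eq_sub hk]
      by_cases hpk : p k
      · have : ∀ l, (if p k ≠ p l then (1:ℝ) else 0) = (if ¬ p l then (1:ℝ) else 0) := by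
          intro l
          congr 1
          simp only [ne_eq, eq_iff_iff, eq_iff_iff]
          constructor
          · intro h hl; exact h (iff_of_true hpk hl)
          · intro h hiff; exact h (hiff.mp hpk)
        simp only [this]
        rw [Finset.sum_boole]
        simp [hpk, hC0]
      · have : ∀ l, (if p k ≠ p l then (1:ℝ) else 0) = (if p l then (1:ℝ) else 0) := by
          intro l
          congr 1
          simp only [ne_eq, eq_iff_iff]
          constructor
          · intro h
            by_contra hl
            exact h (iff_of_false hpk hl)
          · intro hl hiff; exact hpk (hiff.mpr hl)
        simp only [this]
        rw [Finset.sum_boole]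
        simp [hpk, hC1]
    have hconst : ∀ c : ℝ, ∑ _x ∈ S.erase k, c = ((m:ℝ)-1) * c := by
      intro c
      rw [Finset.sum_const, hcardE, nsmul_eq_mul, Nat.cast_sub hm1, Nat.cast_one]
    rw [Finset.sum_sub_distrib, Finset.sum_sub_distrib, h3, ← Finset.sum_div,
        Finset.sum_add_distrib, Finset.sum_add_distrib, Finset.sum_add_distrib,
        h1, h2, hconst, hconst, hconst]
    ring
  have hconstS : ∀ c : ℝ, ∑ _x ∈ S, c = (m:ℝ) * c := by
    intro c; rw [Finset.sum_const, nsmul_eq_mul]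
  have hT3 : ∑ k ∈ S, (if p k then (C0:ℝ) else (C1:ℝ)) = (C1:ℝ)*(C0:ℝ) + (C0:ℝ)*(C1:ℝ) := by
    rw [Finset.sum_ite, Finset.sum_const, Finset.sum_const, nsmul_eq_mul, nsmul_eq_mul]
  have hdouble : ∑ k ∈ S, ∑ l ∈ S.erase k,
      (((if p a ≠ p k then (1:ℝ) else 0) + (if p a ≠ p l then (1:ℝ) else 0)
        + (if p b ≠ p k then (1:ℝ) else 0) + (if p b ≠ p l then (1:ℝ) else 0)) / 2
       - (if p a ≠ p b then (1:ℝ) else 0) - (if p k ≠ p l then (1:ℝ) else 0))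
      = ((m:ℝ)-1) * ((A:ℝ)+(B:ℝ)) - (m:ℝ)*((m:ℝ)-1)*(if p a ≠ p b then (1:ℝ) else 0)
        - 2*(C1:ℝ)*(C0:ℝ) := by
    rw [Finset.sum_congr rfl hinner]
    simp only [Finset.sum_sub_distrib, Finset.sum_add_distrib, ← Finset.sum_div,
      ← Finset.mul_sum]
    rw [hArsum, hBrsum, hT3, hconstS, hconstS, hconstS]
    ring
  -- product of side counts
  have hC1C0 : C1 + C0 = m := Finset.card_filter_add_card_filter_not (p := fun v => p v)
  have hC1C0r : (C1:ℝ) + (C0:ℝ) = (m:ℝ) := by exact_mod_cast congrArg (Nat.cast (R := ℝ)) hC1C0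
  have hCprod : (C1:ℝ)*(C0:ℝ) = (A:ℝ)*((m:ℝ) - (A:ℝ)) := by
    by_cases hpa : p a
    · have hfe : S.filter (fun v => p a ≠ p v) = S.filter (fun v => ¬ p v) := by
        apply Finset.filter_congr; intro v _
        simp only [ne_eq, eq_iff_iff]; tauto
      have hA0 : (A:ℝ) = (C0:ℝ) := by rw [hA, hfe]
      rw [hA0]; linear_combination (C0:ℝ) * hC1C0r
    · have hfe : S.filter (fun v => p a ≠ p v) = S.filter (fun v => p v) := by
        apply Finset.filter_congr; intro v _
        simp only [ne_eq, eq_iff_iff]; tauto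
      have hA0 : (A:ℝ) = (C1:ℝ) := by rw [hA, hfe]
      rw [hA0]; linear_combination (C1:ℝ) * hC1C0r
  have hU : insert a (insert b S) = (Finset.univ : Finset X) := by
    rw [hS, Finset.insert_erase hbmem, Finset.insert_erase (Finset.mem_univ a)]
  have hfiltS : S.filter (fun v => p v ≠ p a) = S.filter (fun v => p a ≠ p v) := by
    apply Finset.filter_congr; intro v _
    simp only [ne_eq, eq_iff_iff]; tauto
  have hsplitU : (Finset.univ.filter (fun v : X => p v = p a)).card
      + (Finset.univ.filter (fun v : X => p v ≠ p a)).card = m + 2 := by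
    have := Finset.card_filter_add_card_filter_not
      (s := (Finset.univ : Finset X)) (p := fun v => p v = p a)
    simp only [ne_eq]
    rw [Finset.card_univ, ← hmcard] at this
    exact this
  have hqa : ¬ (p a ≠ p a) := fun h => h rfl
  by_cases h : p a ≠ p b
  · -- separated case
    have hqb : p b ≠ p a := fun e => h e.symm
    have hNmA : (Finset.univ.filter (fun v : X => p v ≠ p a)).card = A + 1 := by
      rw [← hU, Finset.filter_insert, Finset.filter_insert, if_neg hqa, if_pos hqb,
        Finset.card_insert_of_notMem (fun hb => hbS (Finset.mem_of_mem_filter _ hb)),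
        hfiltS]
    have hABm : A + B = m := by
      have hfe : S.filter (fun v => p b ≠ p v) = S.filter (fun v => ¬ (p a ≠ p v)) := by
        apply Finset.filter_congr; intro v _
        simp only [ne_eq, eq_iff_iff]
        have hne : ¬ (p a ↔ p b) := by
          intro hiff; exact h (eq_iff_iff.mpr hiff)
        tauto
      rw [hA, hB, hfe]
      exact Finset.card_filter_add_card_filter_not (p := fun v => p a ≠ p v)
    have hABr : (A:ℝ) + (B:ℝ) = (m:ℝ) := by exact_mod_cast congrArg (Nat.cast (R := ℝ)) hABm
    have hNmr : ((Finset.univ.filter (fun v : X => p v ≠ p a)).card : ℝ) = (A:ℝ) + 1 := by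
      rw [hNmA]; push_cast; ring
    have hNpr : ((Finset.univ.filter (fun v : X => p v = p a)).card : ℝ)
        = (m:ℝ) + 2 - ((A:ℝ) + 1) := by
      have := congrArg (Nat.cast (R := ℝ)) hsplitU
      push_cast at this
      rw [hNmr] at this
      linarith
    rw [hdouble, if_pos h, if_pos h, hNmr, hNpr]
    linear_combination ((m:ℝ)-1)/2 * hABr - hCprod
  · -- same-side case
    have hpe : p a = p b := not_not.mp h
    have hqb : ¬ (p b ≠ p a) := fun e => e hpe.symm
    have hNmA : (Finset.univ.filter (fun v : X => p v ≠ p a)).card = A := by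
      rw [← hU, Finset.filter_insert, Finset.filter_insert, if_neg hqa, if_neg hqb, hfiltS]
    have hBA : (B:ℝ) = (A:ℝ) := by
      have : B = A := by rw [hB, hA, hpe]
      exact_mod_cast congrArg (Nat.cast (R := ℝ)) this
    have hNmr : ((Finset.univ.filter (fun v : X => p v ≠ p a)).card : ℝ) = (A:ℝ) := by
      rw [hNmA]
    rw [hdouble, if_neg h, if_neg h, hNmr]
    linear_combination ((m:ℝ)-1)/2 * hBA - hCprod


/-- writing the scaled Z-criterion of a tree metric as a linear function
of the edge lengths, `Z_{δT}(a,b) = ∑_{e} β(e) l(e)`, the coefficient of `l(e)` is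
`-(N⁺_e(a)-1)(N⁻_e(a)-1)` if `e` is on the path from `a` to `b` (i.e. `e` separates
`a` from `b`), and `N⁻_e(a)(N⁻_e(a)-1)` otherwise, where `N⁺_e(a)` (resp. `N⁻_e(a)`)
is the number of leaves on the same (resp. far) side of `e` as `a`. -/
theorem statement_12 {X E : Type*} [Fintype X] [DecidableEq X] [Fintype E]
    (σ : E → Finset X) (le : E → ℝ)
    (hle : ∀ e, 0 < le e)
    (hcompat : splitsCompatible σ)
    (hnontriv : ∀ e, (σ e).Nonempty ∧ σ e ≠ Finset.univ)
    (δT : X → X → ℝ)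
    (hδT : ∀ x y, δT x y = ∑ e, if (x ∈ σ e) ≠ (y ∈ σ e) then le e else 0)
    (a b : X) (hab : a ≠ b)
    (Np Nm : E → ℕ)
    (hNp : ∀ e, Np e = (Finset.univ.filter (fun v : X => (v ∈ σ e) = (a ∈ σ e))).card)
    (hNm : ∀ e, Nm e = (Finset.univ.filter (fun v : X => (v ∈ σ e) ≠ (a ∈ σ e))).card) :
    njZ δT a b =
      ∑ e, (if (a ∈ σ e) ≠ (b ∈ σ e)
              then -(((Np e : ℝ) - 1) * ((Nm e : ℝ) - 1))
              else (Nm e : ℝ) * ((Nm e : ℝ) - 1)) * le e := by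
  classical
  have hw : ∀ k l : X, njw δT a b k l =
      ∑ e, ((((if ((a ∈ σ e) : Prop) ≠ (k ∈ σ e) then (1:ℝ) else 0)
            + (if ((a ∈ σ e) : Prop) ≠ (l ∈ σ e) then (1:ℝ) else 0)
            + (if ((b ∈ σ e) : Prop) ≠ (k ∈ σ e) then (1:ℝ) else 0)
            + (if ((b ∈ σ e) : Prop) ≠ (l ∈ σ e) then (1:ℝ) else 0)) / 2
           - (if ((a ∈ σ e) : Prop) ≠ (b ∈ σ e) then (1:ℝ) else 0)
           - (if ((k ∈ σ e) : Prop) ≠ (l ∈ σ e) then (1:ℝ) else 0)) * le e) := by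
    intro k l
    unfold njw
    rw [hδT, hδT, hδT, hδT, hδT, hδT]
    rw [← Finset.sum_add_distrib, ← Finset.sum_add_distrib, ← Finset.sum_add_distrib,
        Finset.sum_div, ← Finset.sum_sub_distrib, ← Finset.sum_sub_distrib]
    refine Finset.sum_congr rfl fun e _ => ?_
    have hite : ∀ (P : Prop) (inst : Decidable P),
        (@ite ℝ P inst (le e) 0) = (@ite ℝ P inst 1 0) * le e := by
      intro P inst; split <;> simp
    simp only [hite]
    ring
  unfold njZ
  simp only [hw]
  set S : Finset X := (Finset.univ.erase a).erase b with hS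
  have hswap : ∀ (F : E → X → X → ℝ),
      (∑ k ∈ S, ∑ l ∈ S.erase k, ∑ e : E, F e k l)
      = ∑ e : E, ∑ k ∈ S, ∑ l ∈ S.erase k, F e k l := by
    intro F
    have h1 : ∀ k : X, (∑ l ∈ S.erase k, ∑ e : E, F e k l)
        = ∑ e : E, ∑ l ∈ S.erase k, F e k l := fun k => Finset.sum_comm
    simp only [h1]
    exact Finset.sum_comm
  rw [hswap, Finset.mul_sum]
  refine Finset.sum_congr rfl fun e _ => ?_
  simp only [← Finset.sum_mul]
  rw [← mul_assoc, hNp, hNm]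
  congr 1
  have h := sum_pairs_coef (fun v => v ∈ σ e) a b hab
  simp only [ne_eq, eq_iff_iff] at h ⊢
  exact h
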